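/- arXiv:1310.0472 — 2 statements merged into one kernel-verified Lean document; each statement's English description precedes it below -/
import Mathlib

section
/- For the slicer map S_α with 0 < α, the travelling areas satisfy A_n = ℓ_{n−1}(α) = (n − 1 + 2^{1/α})^{−α} = A_{−n} for all n ≥ 1, where A_j is the measure of the portion of the initial cell found in cell j at time n. -/
open MeasureTheory

noncomputable def slicer (ℓ : ℤ → ℝ) : ℝ × ℤ → ℝ × ℤ :=
  fun p => if (0 ≤ p.1 ∧ p.1 < ℓ p.2) ∨ (1/2 < p.1 ∧ p.1 ≤ 1 - ℓ p.2)
    then (p.1, p.2 - 1) else (p.1, p.2 + 1)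

noncomputable def ella (α : ℝ) (m : ℤ) : ℝ :=
  (((|m| : ℤ) : ℝ) + (2:ℝ) ^ (1/α)) ^ (-α)

noncomputable def slicerA (α : ℝ) (n : ℕ) (j : ℤ) : ℝ :=
  (volume {x : ℝ | x ∈ Set.Icc (0:ℝ) 1 ∧ ((slicer (ella α))^[n] (x, 0)).2 = j}).toReal

/-! ### Auxiliary lemmas -/

lemma two_rpow_pos (α : ℝ) : (0:ℝ) < (2:ℝ) ^ (1/α) :=
  Real.rpow_pos_of_pos (by norm_num) _

lemma ella_nat (α : ℝ) (k : ℕ) : ella α (k : ℤ) = ((k:ℝ) + (2:ℝ) ^ (1/α)) ^ (-α) := by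
  simp [ella]

lemma ella_pos (α : ℝ) (m : ℤ) : 0 < ella α m := by
  apply Real.rpow_pos_of_pos
  have h1 : (0:ℝ) ≤ ((|m| : ℤ) : ℝ) := by positivity
  have := two_rpow_pos α
  linarith

lemma ella_zero (α : ℝ) (hα : 0 < α) : ella α 0 = 1/2 := by
  have h2 : (0:ℝ) ≤ 2 := by norm_num
  rw [ella]
  simp only [abs_zero, Int.cast_zero, zero_add]
  rw [← Real.rpow_mul h2, show (1/α) * (-α) = -1 by field_simp,
    Real.rpow_neg_one]
  norm_num

lemma ella_strict_anti (α : ℝ) (hα : 0 < α) {j k : ℕ} (h : j < k) :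
    ella α (k : ℤ) < ella α (j : ℤ) := by
  rw [ella_nat, ella_nat]
  apply Real.rpow_lt_rpow_of_neg
  · have := two_rpow_pos α; positivity
  · have : (j:ℝ) < (k:ℝ) := by exact_mod_cast h
    linarith
  · linarith

lemma ella_le_half (α : ℝ) (hα : 0 < α) (k : ℕ) : ella α (k : ℤ) ≤ 1/2 := by
  rcases Nat.eq_zero_or_pos k with hk | hk
  · subst hk; rw [Nat.cast_zero, ella_zero α hα]
  · have := ella_strict_anti α hα hk
    rw [Nat.cast_zero, ella_zero α hα] at this
    linarith

lemma ella_lt_half (α : ℝ) (hα : 0 < α) {k : ℕ} (hk : 0 < k) : ella α (k : ℤ) < 1/2 := by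
  have := ella_strict_anti α hα hk
  rw [Nat.cast_zero, ella_zero α hα] at this
  exact this

lemma slicer_fst (ℓ : ℤ → ℝ) (p : ℝ × ℤ) : (slicer ℓ p).1 = p.1 := by
  rw [slicer]; split <;> rfl

lemma slicer_iter_fst (ℓ : ℤ → ℝ) (k : ℕ) (p : ℝ × ℤ) :
    ((slicer ℓ)^[k] p).1 = p.1 := by
  induction k generalizing p with
  | zero => rfl
  | succ k ih =>
    rw [Function.iterate_succ_apply', slicer_fst, ih]

lemma slicer_snd (ℓ : ℤ → ℝ) (p : ℝ × ℤ) :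
    (slicer ℓ p).2 = p.2 - 1 ∨ (slicer ℓ p).2 = p.2 + 1 := by
  rw [slicer]; split
  · left; rfl
  · right; rfl

lemma slicer_iter_abs_le (ℓ : ℤ → ℝ) (k : ℕ) (x : ℝ) :
    |((slicer ℓ)^[k] (x, 0)).2| ≤ (k : ℤ) := by
  induction k with
  | zero => simp
  | succ k ih =>
    rw [Function.iterate_succ_apply']
    rcases slicer_snd ℓ ((slicer ℓ)^[k] (x, 0)) with h | h <;> rw [h] <;>
      · rw [abs_le] at ih ⊢; push_cast; omega

/-- The key trajectory lemma. -/
lemma slicer_traj (α : ℝ) (hα : 0 < α) (k : ℕ) (x : ℝ) (hx0 : 0 ≤ x) (hx1 : x ≤ 1) :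
    (((slicer (ella α))^[k+1] (x, 0)).2 = ((k:ℤ)+1) ↔ (x = 1/2 ∨ 1 - ella α (k:ℤ) < x)) ∧
    (((slicer (ella α))^[k+1] (x, 0)).2 = -((k:ℤ)+1) ↔ x < ella α (k:ℤ)) := by
  induction k with
  | zero =>
    have h0 : ella α 0 = 1/2 := ella_zero α hα
    simp only [Nat.cast_zero, h0]
    have hiter : (slicer (ella α))^[0+1] (x, 0) = slicer (ella α) (x, 0) := rfl
    rw [hiter]
    by_cases hx : x < 1/2
    · have hs : slicer (ella α) (x, 0) = (x, -1) := by
        rw [slicer, if_pos]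
        · norm_num
        · left
          refine ⟨hx0, ?_⟩
          show x < ella α 0
          rw [h0]; exact hx
      rw [hs]
      constructor
      · constructor
        · intro h; exfalso; simp at h
        · intro h; exfalso; rcases h with h | h <;> linarith
      · constructor
        · intro _; exact hx
        · intro _; simp
    · push_neg at hx
      have hs : slicer (ella α) (x, 0) = (x, 1) := by
        rw [slicer, if_neg]
        · norm_num
        · push_neg
          constructor
          · intro _
            show ella α 0 ≤ x
            rw [h0]; exact hx
          · intro h
            show 1 - ella α 0 < x
            rw [h0]; linarith
      rw [hs]
      constructor
      · constructor
        · intro _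
          rcases eq_or_lt_of_le hx with h | h
          · left; exact h.symm
          · right; linarith
        · intro _; simp
      · constructor
        · intro h; exfalso; simp at h
        · intro h; exfalso; linarith
  | succ k ih =>
    simp only [Nat.cast_add, Nat.cast_one]
    obtain ⟨ihu, ihd⟩ := ih
    have hfst : ((slicer (ella α))^[k+1] (x, 0)).1 = x := slicer_iter_fst _ _ _
    have habs : |((slicer (ella α))^[k+1] (x, 0)).2| ≤ ((k:ℤ)+1) := by
      have := slicer_iter_abs_le (ella α) (k+1) x
      push_cast at this; exact this
    rw [abs_le] at habs
    set p := (slicer (ella α))^[k+1] (x, 0) with hp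
    have hstep : (slicer (ella α) p).2 = p.2 - 1 ∨ (slicer (ella α) p).2 = p.2 + 1 :=
      slicer_snd _ _
    have hiter : (slicer (ella α))^[k+1+1] (x, 0) = slicer (ella α) p := by
      rw [Function.iterate_succ_apply']
    have hkpos : (0:ℕ) < k + 1 := Nat.succ_pos k
    have hlt : ella α ((k:ℤ)+1) < ella α (k:ℤ) := by
      have := ella_strict_anti α hα (Nat.lt_succ_self k)
      push_cast at this; exact this
    have hlehalf : ella α (k:ℤ) ≤ 1/2 := ella_le_half α hα k
    have hlthalf : ella α ((k:ℤ)+1) < 1/2 := by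
      have := ella_lt_half α hα hkpos
      push_cast at this; exact this
    have hellapos : 0 < ella α ((k:ℤ)+1) := ella_pos α _
    constructor
    · -- upward
      rw [hiter]
      constructor
      · intro h
        have hc : p.2 = (k:ℤ)+1 := by omega
        have hx12 : x = 1/2 ∨ 1 - ella α (k:ℤ) < x := ihu.mp hc
        have hcond : ¬ ((0 ≤ p.1 ∧ p.1 < ella α p.2) ∨
            (1/2 < p.1 ∧ p.1 ≤ 1 - ella α p.2)) := by
          intro hcnd
          rw [slicer] at h
          rw [if_pos hcnd] at h
          simp only at h
          omega
        rw [hfst, hc] at hcond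
        push_neg at hcond
        obtain ⟨hc1, hc2⟩ := hcond
        rcases hx12 with h12 | hgt
        · left; exact h12
        · right
          have hxhalf : 1/2 < x := by linarith
          have := hc2 hxhalf
          linarith
      · intro hx12
        have hprev : x = 1/2 ∨ 1 - ella α (k:ℤ) < x := by
          rcases hx12 with h | h
          · left; exact h
          · right; linarith
        have hc : p.2 = (k:ℤ)+1 := ihu.mpr hprev
        rw [slicer]
        rw [if_neg]
        · show p.2 + 1 = (k:ℤ)+1+1
          omega
        · rw [hfst, hc]
          push_neg
          refine ⟨fun _ => ?_, fun hxh => ?_⟩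
          · show ella α ((k:ℤ)+1) ≤ x
            rcases hx12 with h | h
            · rw [h]; linarith
            · linarith
          · show 1 - ella α ((k:ℤ)+1) < x
            rcases hx12 with h | h
            · exfalso; rw [h] at hxh; exact lt_irrefl _ hxh
            · exact h
    · -- downward
      rw [hiter]
      constructor
      · intro h
        have hc : p.2 = -((k:ℤ)+1) := by omega
        have hxlt : x < ella α (k:ℤ) := ihd.mp hc
        have hcond : (0 ≤ p.1 ∧ p.1 < ella α p.2) ∨
            (1/2 < p.1 ∧ p.1 ≤ 1 - ella α p.2) := by
          by_contra hcnd
          rw [slicer, if_neg hcnd] at h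
          simp only at h
          omega
        rw [hfst, hc] at hcond
        have habs2 : ella α (-((k:ℤ)+1)) = ella α ((k:ℤ)+1) := by
          rw [ella, ella, abs_neg]
        rw [habs2] at hcond
        rcases hcond with ⟨_, h1⟩ | ⟨h1, h2⟩
        · linarith
        · linarith
      · intro hxlt
        have hc : p.2 = -((k:ℤ)+1) := ihd.mpr (by linarith)
        rw [slicer]
        have habs2 : ella α (-((k:ℤ)+1)) = ella α ((k:ℤ)+1) := by
          rw [ella, ella, abs_neg]
        rw [if_pos]
        · show p.2 - 1 = -((k:ℤ)+1+1)
          omega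
        · rw [hfst, hc, habs2]
          left
          exact ⟨hx0, by linarith⟩

/-- for `α > 0` the travelling areas satisfy
`A_n = ℓ_{n-1}(α) = (n - 1 + 2^{1/α})^{-α} = A_{-n}` for all `n ≥ 1`. -/
theorem travelling_areas (α : ℝ) (hα : 0 < α) (n : ℕ) (hn : 1 ≤ n) :
    slicerA α n (n:ℤ) = ella α ((n:ℤ) - 1) ∧
    ella α ((n:ℤ) - 1) = ((n:ℝ) - 1 + (2:ℝ) ^ (1/α)) ^ (-α) ∧
    slicerA α n (-(n:ℤ)) = ella α ((n:ℤ) - 1) := by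
  obtain ⟨k, rfl⟩ : ∃ k, n = k + 1 := ⟨n - 1, by omega⟩
  have hcast : ((k+1:ℕ):ℤ) - 1 = (k:ℤ) := by push_cast; ring
  rw [hcast]
  have hL := ella_pos α (k:ℤ)
  have hLh := ella_le_half α hα k
  refine ⟨?_, ?_, ?_⟩
  · -- A_n
    have hset : {x : ℝ | x ∈ Set.Icc (0:ℝ) 1 ∧
        ((slicer (ella α))^[k+1] (x, 0)).2 = ((k+1:ℕ):ℤ)} =
        insert (1/2 : ℝ) (Set.Ioc (1 - ella α (k:ℤ)) 1) := by
      ext x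
      simp only [Set.mem_setOf_eq, Set.mem_Icc, Set.mem_insert_iff, Set.mem_Ioc]
      constructor
      · rintro ⟨⟨hx0, hx1⟩, h⟩
        have := (slicer_traj α hα k x hx0 hx1).1.mp (by push_cast at h ⊢; exact h)
        rcases this with h' | h'
        · left; exact h'
        · right; exact ⟨h', hx1⟩
      · rintro (h | ⟨h1, h2⟩)
        · subst h
          refine ⟨⟨by norm_num, by norm_num⟩, ?_⟩
          have := (slicer_traj α hα k (1/2) (by norm_num) (by norm_num)).1.mpr (Or.inl rfl)
          push_cast
          exact this
        · have hx0 : 0 ≤ x := by linarith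
          refine ⟨⟨hx0, h2⟩, ?_⟩
          have := (slicer_traj α hα k x hx0 h2).1.mpr (Or.inr h1)
          push_cast
          exact this
    rw [slicerA, hset]
    have hins : volume (insert (1/2:ℝ) (Set.Ioc (1 - ella α (k:ℤ)) 1)) =
        volume (Set.Ioc (1 - ella α (k:ℤ)) 1) := by
      apply le_antisymm
      · rw [Set.insert_eq]
        calc volume ({(1/2:ℝ)} ∪ Set.Ioc (1 - ella α (k:ℤ)) 1)
            ≤ volume {(1/2:ℝ)} + volume (Set.Ioc (1 - ella α (k:ℤ)) 1) :=
              measure_union_le _ _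
          _ = volume (Set.Ioc (1 - ella α (k:ℤ)) 1) := by
              rw [Real.volume_singleton, zero_add]
      · exact measure_mono (Set.subset_insert _ _)
    rw [hins, Real.volume_Ioc]
    rw [ENNReal.toReal_ofReal (by linarith)]
    ring
  · -- middle equality
    rw [ella_nat]
    push_cast
    ring_nf
  · -- A_{-n}
    have hset : {x : ℝ | x ∈ Set.Icc (0:ℝ) 1 ∧
        ((slicer (ella α))^[k+1] (x, 0)).2 = -((k+1:ℕ):ℤ)} =
        Set.Ico (0:ℝ) (ella α (k:ℤ)) := by
      ext x
      simp only [Set.mem_setOf_eq, Set.mem_Icc, Set.mem_Ico]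
      constructor
      · rintro ⟨⟨hx0, hx1⟩, h⟩
        have := (slicer_traj α hα k x hx0 hx1).2.mp (by push_cast at h ⊢; exact h)
        exact ⟨hx0, this⟩
      · rintro ⟨hx0, hxl⟩
        have hx1 : x ≤ 1 := by linarith
        refine ⟨⟨hx0, hx1⟩, ?_⟩
        have := (slicer_traj α hα k x hx0 hx1).2.mpr hxl
        push_cast
        exact this
    rw [slicerA, hset, Real.volume_Ico, sub_zero,
      ENNReal.toReal_ofReal (le_of_lt hL)]
end

section
/- For α ∈ (0,2] and integer p ≥ 3, the function f(x) = [(x+1)^p − x^p] / (2x + 1 + 2^{1/α})^α is increasing for x > 0. -/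
lemma aux1 (b : ℝ) (hb : 0 ≤ b) : ∀ m : ℕ, b^(m+1) + (m+1)*b^m ≤ (b+1)^(m+1) := by
  intro m
  induction m with
  | zero => norm_num
  | succ m ih =>
    have h1 : (0:ℝ) ≤ b^m := pow_nonneg hb m
    have h2 : (b+1)^(m+2) = (b+1) * (b+1)^(m+1) := by ring
    have h3 : (0:ℝ) ≤ (m:ℝ) := Nat.cast_nonneg m
    have h4 : b^(m+2) = b * b^(m+1) := by ring
    have h5 : b^(m+1) = b * b^m := by ring
    push_cast
    nlinarith [mul_le_mul_of_nonneg_left ih (by linarith : (0:ℝ) ≤ b+1),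
      mul_nonneg hb h1, mul_nonneg h3 h1]

lemma key (b c α : ℝ) (hb : 0 < b) (hc : 1 ≤ c) (hα0 : 0 < α) (hα2 : α ≤ 2) (q : ℕ) :
    2*α*((b+1)^(q+3) - b^(q+3)) ≤ (((q:ℝ)+3) * (b+1)^(q+2) - ((q:ℝ)+3) * b^(q+2)) * (2*b+1+c) := by
  set B1 := b^(q+1) with hB1
  have hB1n : 0 ≤ B1 := pow_nonneg hb.le _
  have hA : b^(q+2) + ((q:ℝ)+2)*b^(q+1) ≤ (b+1)^(q+2) := by
    have := aux1 b hb.le (q+1)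
    push_cast at this ⊢
    convert this using 2 <;> ring
  have hq : (0:ℝ) ≤ (q:ℝ) := Nat.cast_nonneg q
  set A2 := (b+1)^(q+2) with hA2
  have hb2 : b^(q+2) = b * B1 := by rw [hB1]; ring
  have hb3 : b^(q+3) = b * b * B1 := by rw [hB1]; ring
  have hA3 : (b+1)^(q+3) = (b+1) * A2 := by rw [hA2]; ring
  rw [hb2, hb3, hA3]
  rw [hb2] at hA
  have hΔ : (q:ℝ)+2 ≤ 0 ∨ True := Or.inr trivial
  have hDpos : ((q:ℝ)+2) * B1 ≤ A2 - b * B1 := by linarith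
  have hDnn : 0 ≤ A2 - b * B1 := le_trans (by positivity) hDpos
  nlinarith [mul_le_mul_of_nonneg_left hDpos (by positivity : (0:ℝ) ≤ 2*((q:ℝ)+1)*(b+1)),
    mul_nonneg (mul_nonneg (by linarith : (0:ℝ) ≤ 2-α) hDnn) (by linarith : (0:ℝ) ≤ b+1),
    mul_nonneg (by linarith : (0:ℝ) ≤ 2-α) (mul_nonneg hb.le hB1n),
    mul_nonneg (mul_nonneg hq hDnn) (by linarith : (0:ℝ) ≤ 2*b+1+c),
    mul_nonneg (mul_nonneg (by linarith : (0:ℝ) ≤ (q:ℝ)+3) hDnn) (by linarith : (0:ℝ) ≤ c-1),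
    mul_nonneg hq hB1n, mul_nonneg (mul_nonneg hq hB1n) hb.le]

/-- for `α ∈ (0,2]` and integer `p ≥ 3`, the function
`f(x) = [(x+1)^p - x^p] / (2x + 1 + 2^{1/α})^α` is increasing for `x > 0`. -/
theorem f_monotoneOn (α : ℝ) (hα : α ∈ Set.Ioc (0:ℝ) 2) (p : ℕ) (hp : 3 ≤ p) :
    MonotoneOn (fun x : ℝ => ((x + 1)^p - x^p) / (2*x + 1 + (2:ℝ)^(1/α)) ^ α)
      (Set.Ioi (0:ℝ)) := by
  obtain ⟨hα0, hα2⟩ := hα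
  set c := (2:ℝ)^(1/α) with hc
  have hc1 : 1 ≤ c := Real.one_le_rpow (by norm_num) (by positivity)
  obtain ⟨q, rfl⟩ : ∃ q, p = q + 3 := ⟨p - 3, by omega⟩
  set p := q + 3 with hpdef
  -- derivative at each point
  have hder : ∀ x : ℝ, 0 < x → HasDerivAt
      (fun x : ℝ => ((x + 1)^p - x^p) / (2*x + 1 + c) ^ α)
      ((((p:ℝ)*(x+1)^(p-1) - (p:ℝ)*x^(p-1)) * (2*x+1+c)^α
        - ((x+1)^p - x^p) * (α * (2*x+1+c)^(α-1) * 2)) / ((2*x+1+c)^α)^2) x := by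
    intro x hx
    have ht : 0 < 2*x+1+c := by linarith
    have h1 : HasDerivAt (fun y : ℝ => (y+1)^p) ((p:ℝ)*(x+1)^(p-1)) x := by
      simpa [Pi.pow_def] using ((hasDerivAt_id x).add_const 1).pow p
    have hN := h1.sub (hasDerivAt_pow p x)
    have hlin : HasDerivAt (fun y : ℝ => 2*y+1+c) 2 x := by
      have h2 : HasDerivAt (fun y : ℝ => 2*y) 2 x := by
        simpa using (hasDerivAt_id x).const_mul 2
      simpa using (h2.add_const 1).add_const c
    have hD : HasDerivAt (fun y : ℝ => (2*y+1+c)^α) (α * (2*x+1+c)^(α-1) * 2) x := by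
      have := (Real.hasDerivAt_rpow_const (p := α) (x := 2*x+1+c) (Or.inl ht.ne')).comp x hlin
      simpa [mul_assoc, Function.comp_def] using this
    exact hN.div hD (by positivity)
  apply monotoneOn_of_deriv_nonneg (convex_Ioi 0)
  · intro x hx
    exact (hder x hx).continuousAt.continuousWithinAt
  · rw [interior_Ioi]
    intro x hx
    exact (hder x hx).differentiableAt.differentiableWithinAt
  · rw [interior_Ioi]
    intro x hx
    rw [(hder x hx).deriv]
    have ht : 0 < 2*x+1+c := by linarith [Set.mem_Ioi.mp hx]
    have hx0 : (0:ℝ) < x := hx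
    apply div_nonneg _ (sq_nonneg _)
    have hsplit : (2*x+1+c)^α = (2*x+1+c)^(α-1) * (2*x+1+c) := by
      rw [← Real.rpow_add_one ht.ne']; ring_nf
    rw [hsplit]
    have hkey := key x c α hx0 hc1 hα0 hα2 q
    have htpow : (0:ℝ) ≤ (2*x+1+c)^(α-1) := Real.rpow_nonneg ht.le _
    have hcast : ((p:ℝ)) = (q:ℝ)+3 := by push_cast [hpdef]; ring
    have hexp : p - 1 = q + 2 := by omega
    rw [hexp, hcast]
    have hrw : ∀ y:ℝ, y^p = y^(q+3) := fun y => by rw [hpdef]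
    rw [hrw, hrw]
    nlinarith [mul_le_mul_of_nonneg_left hkey htpow]
end
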